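/- Let w₀ be the first eigenfunction (positive on (0, D/2)) of the boundary value problem w'' + σs·w = −μ₀w on [0, D/2] with w'(0) = 0 and w(D/2) = 0, and suppose μ₀ < 0 and 0 < −μ₀ < σ·(D/2). Then v = w₀'/w₀ satisfies v' + v² = −σs − μ₀ with v(0) = 0, has a unique critical point s₀ ∈ (0, D/2), which is a maximum, with v' > 0 on [0, s₀) and v' < 0 on (s₀, D/2), and v(s₀) = √(−μ₀ − σs₀) < √(−μ₀). -/

import Mathlib

open Set

/-- Properties of `v = w₀'/w₀` for the first eigenfunction of
`w'' + σs·w = −μ₀w` on `[0, D/2]` with `w'(0) = 0`, `w(D/2) = 0`: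
Riccati equation, `v(0) = 0`, unique interior critical point `s₀` which is a
maximum, monotonicity of `v` on each side, and the value `v(s₀) = √(−μ₀−σs₀)`. -/
theorem stmt6 (D σ μ₀ : ℝ) (hD : 0 < D) (hσ : 0 < σ)
    (w₀ w₀' w₀'' : ℝ → ℝ)
    (hd1 : ∀ s ∈ Icc 0 (D / 2), HasDerivAt w₀ (w₀' s) s)
    (hd2 : ∀ s ∈ Icc 0 (D / 2), HasDerivAt w₀' (w₀'' s) s)
    (hcont : ContinuousOn w₀'' (Icc 0 (D / 2)))
    (heq : ∀ s ∈ Icc 0 (D / 2), w₀'' s + σ * s * w₀ s = -μ₀ * w₀ s)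
    (hpos : ∀ s ∈ Ico 0 (D / 2), 0 < w₀ s)
    (hend : w₀ (D / 2) = 0)
    (hneu : w₀' 0 = 0)
    (hμneg : μ₀ < 0) (hμ : -μ₀ < σ * (D / 2)) :
    (∀ s ∈ Ico 0 (D / 2),
        HasDerivAt (fun τ => w₀' τ / w₀ τ)
          (-(σ * s) - μ₀ - (w₀' s / w₀ s) ^ 2) s) ∧
    w₀' 0 / w₀ 0 = 0 ∧
    ∃ s₀ ∈ Ioo 0 (D / 2),
      deriv (fun τ => w₀' τ / w₀ τ) s₀ = 0 ∧
      (∀ s ∈ Ioo 0 (D / 2), deriv (fun τ => w₀' τ / w₀ τ) s = 0 → s = s₀) ∧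
      IsMaxOn (fun τ => w₀' τ / w₀ τ) (Icc 0 (D / 2)) s₀ ∧
      (∀ s ∈ Ico 0 (D / 2), s < s₀ → 0 < deriv (fun τ => w₀' τ / w₀ τ) s) ∧
      (∀ s ∈ Ioo s₀ (D / 2), deriv (fun τ => w₀' τ / w₀ τ) s < 0) ∧
      w₀' s₀ / w₀ s₀ = Real.sqrt (-μ₀ - σ * s₀) ∧
      w₀' s₀ / w₀ s₀ < Real.sqrt (-μ₀) := by
  have hD2 : (0:ℝ) < D / 2 := by linarith
  set v : ℝ → ℝ := fun τ => w₀' τ / w₀ τ with hvdef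
  set G : ℝ → ℝ := fun s => (-(σ*s) - μ₀) * (w₀ s)^2 - (w₀' s)^2 with hGdef
  have hw2 : ∀ s ∈ Icc 0 (D/2), w₀'' s = (-(σ*s) - μ₀) * w₀ s := by
    intro s hs
    have h := heq s hs
    linear_combination h
  -- Riccati equation
  have hvderiv : ∀ s ∈ Ico 0 (D/2),
      HasDerivAt v (-(σ*s) - μ₀ - (v s)^2) s := by
    intro s hs
    have hsI : s ∈ Icc 0 (D/2) := Ico_subset_Icc_self hs
    have hw : w₀ s ≠ 0 := (hpos s hs).ne'
    have h : HasDerivAt (fun τ => w₀' τ / w₀ τ) _ s := (hd2 s hsI).div (hd1 s hsI) hw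
    have h2 := hw2 s hsI
    convert h using 1
    simp only [hvdef]
    rw [h2]
    field_simp
  have hv0 : v 0 = 0 := by simp [hvdef, hneu]
  -- derivative of G
  have hGd : ∀ s ∈ Icc 0 (D/2), HasDerivAt G (-σ * (w₀ s)^2) s := by
    intro s hs
    have h1 := hd1 s hs
    have h2 := hd2 s hs
    have hA : HasDerivAt (fun τ : ℝ => -(σ*τ) - μ₀) (-σ) s := by
      simpa using (((hasDerivAt_id s).const_mul σ).neg.sub_const μ₀)
    have hB : HasDerivAt (fun τ => (w₀ τ)^2) (2 * w₀ s * w₀' s) s := by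
      have h1p : HasDerivAt (fun τ => (w₀ τ)^2) _ s := h1.fun_pow 2
      convert h1p using 1; ring
    have hC : HasDerivAt (fun τ => (w₀' τ)^2) (2 * w₀' s * w₀'' s) s := by
      have h2p : HasDerivAt (fun τ => (w₀' τ)^2) _ s := h2.fun_pow 2
      convert h2p using 1; ring
    have h : HasDerivAt G _ s := (hA.mul hB).sub hC
    convert h using 1
    rw [hw2 s hs]; ring
  have hGcont : ContinuousOn G (Icc 0 (D/2)) :=
    fun s hs => ((hGd s hs).continuousAt).continuousWithinAt
  have hGanti : StrictAntiOn G (Icc 0 (D/2)) := by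
    apply strictAntiOn_of_deriv_neg (convex_Icc _ _) hGcont
    intro s hs
    rw [interior_Icc] at hs
    rw [(hGd s (Ioo_subset_Icc_self hs)).deriv]
    have hw : 0 < w₀ s := hpos s ⟨hs.1.le, hs.2⟩
    nlinarith [pow_pos hw 2]
  have hG0 : 0 < G 0 := by
    have hw : 0 < w₀ 0 := hpos 0 ⟨le_refl _, hD2⟩
    simp only [hGdef, hneu]
    nlinarith [pow_pos hw 2]
  -- a point where G is negative
  set s₁ : ℝ := (-μ₀/σ + D/2)/2 with hs₁def
  have hstar : -μ₀/σ < D/2 := by rw [div_lt_iff₀ hσ]; nlinarith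
  have hstar0 : 0 < -μ₀/σ := div_pos (by linarith) hσ
  have hs₁l : -μ₀/σ < s₁ := by rw [hs₁def]; linarith
  have hs₁r : s₁ < D/2 := by rw [hs₁def]; linarith
  have hs₁0 : 0 < s₁ := by linarith
  have hσs₁ : -μ₀ < σ * s₁ := by
    rw [div_lt_iff₀ hσ] at hs₁l; linarith [mul_comm s₁ σ]
  have hGs₁ : G s₁ < 0 := by
    have hw : 0 < w₀ s₁ := hpos s₁ ⟨hs₁0.le, hs₁r⟩
    simp only [hGdef]
    nlinarith [pow_pos hw 2, sq_nonneg (w₀' s₁)]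
  -- IVT: zero of G
  have hsub : Icc 0 s₁ ⊆ Icc 0 (D/2) := Icc_subset_Icc le_rfl hs₁r.le
  have hmem : (0:ℝ) ∈ Ioo (G s₁) (G 0) := ⟨hGs₁, hG0⟩
  obtain ⟨s₀, hs₀mem, hGs₀⟩ :=
    intermediate_value_Ioo' hs₁0.le (hGcont.mono hsub) hmem
  have hs₀ : s₀ ∈ Ioo 0 (D/2) := ⟨hs₀mem.1, hs₀mem.2.trans hs₁r⟩
  have hs₀I : s₀ ∈ Icc 0 (D/2) := ⟨hs₀.1.le, hs₀.2.le⟩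
  have hGpos : ∀ s ∈ Icc 0 (D/2), s < s₀ → 0 < G s := by
    intro s hs h
    have := hGanti hs hs₀I h
    rw [hGs₀] at this; exact this
  have hGneg : ∀ s ∈ Icc 0 (D/2), s₀ < s → G s < 0 := by
    intro s hs h
    have := hGanti hs₀I hs h
    rw [hGs₀] at this; exact this
  -- deriv formula
  have hderiv : ∀ s ∈ Ico 0 (D/2), deriv v s = G s / (w₀ s)^2 := by
    intro s hs
    rw [(hvderiv s hs).deriv]
    have hw : w₀ s ≠ 0 := (hpos s hs).ne'
    simp only [hvdef, hGdef]
    field_simp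
  have hvcont : ∀ s ∈ Ico 0 (D/2), ContinuousAt v s :=
    fun s hs => (hvderiv s hs).continuousAt
  -- monotone on [0, s₀]
  have hmono : StrictMonoOn v (Icc 0 s₀) := by
    apply strictMonoOn_of_deriv_pos (convex_Icc _ _)
    · intro s hs
      exact (hvcont s ⟨hs.1, lt_of_le_of_lt hs.2 hs₀.2⟩).continuousWithinAt
    · intro s hs
      rw [interior_Icc] at hs
      have hsI : s ∈ Ico 0 (D/2) := ⟨hs.1.le, hs.2.trans hs₀.2⟩
      rw [hderiv s hsI]
      exact div_pos (hGpos s (Ico_subset_Icc_self hsI) hs.2) (pow_pos (hpos s hsI) 2)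
  have hvs₀pos : 0 < v s₀ := by
    have h := hmono ⟨le_rfl, hs₀.1.le⟩ ⟨hs₀.1.le, le_rfl⟩ hs₀.1
    rwa [hv0] at h
  have hws₀ : 0 < w₀ s₀ := hpos s₀ ⟨hs₀.1.le, hs₀.2⟩
  have hsq : (v s₀)^2 = -μ₀ - σ * s₀ := by
    simp only [hvdef, hGdef] at hGs₀ ⊢
    field_simp
    linear_combination -hGs₀
  have hsqrt : v s₀ = Real.sqrt (-μ₀ - σ*s₀) := by
    rw [← hsq, Real.sqrt_sq hvs₀pos.le]
  have hlt : v s₀ < Real.sqrt (-μ₀) := by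
    rw [hsqrt]
    apply Real.sqrt_lt_sqrt
    · nlinarith [sq_nonneg (v s₀), hsq]
    · nlinarith [hs₀.1]
  have hmax : IsMaxOn v (Icc 0 (D/2)) s₀ := by
    rw [isMaxOn_iff]
    intro s hs
    rcases lt_trichotomy s s₀ with h | h | h
    · exact (hmono ⟨hs.1, h.le⟩ ⟨hs₀.1.le, le_rfl⟩ h).le
    · exact le_of_eq (by rw [h])
    · rcases eq_or_lt_of_le hs.2 with he | hlt2
      · have hvD : v s = 0 := by rw [he]; simp [hvdef, hend]
        rw [hvD]; exact hvs₀pos.le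
      · have hanti : StrictAntiOn v (Icc s₀ s) := by
          apply strictAntiOn_of_deriv_neg (convex_Icc _ _)
          · intro t ht
            exact (hvcont t ⟨hs₀.1.le.trans ht.1,
              lt_of_le_of_lt ht.2 hlt2⟩).continuousWithinAt
          · intro t ht
            rw [interior_Icc] at ht
            have htI : t ∈ Ico 0 (D/2) :=
              ⟨hs₀.1.le.trans ht.1.le, ht.2.trans hlt2⟩
            rw [hderiv t htI]
            exact div_neg_of_neg_of_pos
              (hGneg t (Ico_subset_Icc_self htI) ht.1) (pow_pos (hpos t htI) 2)
        exact (hanti ⟨le_rfl, h.le⟩ ⟨h.le, le_rfl⟩ h).le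
  refine ⟨hvderiv, hv0, s₀, hs₀, ?_, ?_, hmax, ?_, ?_, hsqrt, hlt⟩
  · rw [hderiv s₀ ⟨hs₀.1.le, hs₀.2⟩, hGs₀, zero_div]
  · intro s hsIoo hder
    have hsI : s ∈ Ico 0 (D/2) := ⟨hsIoo.1.le, hsIoo.2⟩
    rw [hderiv s hsI] at hder
    have hw : (w₀ s)^2 ≠ 0 := (pow_pos (hpos s hsI) 2).ne'
    have hG0' : G s = 0 := by
      rcases div_eq_zero_iff.mp hder with h | h
      · exact h
      · exact absurd h hw
    rcases lt_trichotomy s s₀ with h | h | h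
    · exact absurd hG0' (hGpos s (Ico_subset_Icc_self hsI) h).ne'
    · exact h
    · exact absurd hG0' (hGneg s (Ico_subset_Icc_self hsI) h).ne
  · intro s hs hlt'
    rw [hderiv s hs]
    exact div_pos (hGpos s (Ico_subset_Icc_self hs) hlt') (pow_pos (hpos s hs) 2)
  · intro s hs
    have hsI : s ∈ Ico 0 (D/2) := ⟨hs₀.1.le.trans hs.1.le, hs.2⟩
    rw [hderiv s hsI]
    exact div_neg_of_neg_of_pos (hGneg s (Ico_subset_Icc_self hsI) hs.1)
      (pow_pos (hpos s hsI) 2)
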